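/- Let P, P' be Markov kernels with invariant probability measures π, π', and let f be bounded measurable. Let Λ'f denote a bounded solution of the Poisson equation Λ'f − P'(Λ'f) = f − π'(f), and suppose g := (P − P')(Λ'f) is bounded and Λ'g is a bounded solution of Λ'g − P'(Λ'g) = g − π'(g). Then π(f) − π'(f) = π'((P − P') Λ'f) + π((P − P') Λ'(P − P') Λ'f). -/

import Mathlib

open MeasureTheory ProbabilityTheory

lemma aux_int {X : Type*} [MeasurableSpace X] {μ : Measure X} [IsFiniteMeasure μ]
    {h : X → ℝ} (hm : Measurable h) {C : ℝ} (hb : ∀ x, |h x| ≤ C) :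
    Integrable h μ :=
  (integrable_const C).mono' hm.aestronglyMeasurable (ae_of_all _ fun x => by
    simpa [Real.norm_eq_abs] using hb x)

lemma aux_bind_eq {X : Type*} [MeasurableSpace X] (μ : Measure X) [IsProbabilityMeasure μ]
    (κ : Kernel X X) [IsMarkovKernel κ] :
    μ.bind (fun x => κ x) = (μ.compProd κ).map Prod.snd := by
  ext s hs
  rw [Measure.bind_apply hs (Kernel.measurable κ).aemeasurable, Measure.map_apply measurable_snd hs,
    Measure.compProd_apply (measurable_snd hs)]
  rfl

lemma aux_swap {X : Type*} [MeasurableSpace X] (μ : Measure X) [IsProbabilityMeasure μ]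
    (κ : Kernel X X) [IsMarkovKernel κ] {h : X → ℝ} (hm : Measurable h) {C : ℝ}
    (hb : ∀ x, |h x| ≤ C) :
    ∫ x, h x ∂(μ.bind (fun x => κ x)) = ∫ x, ∫ y, h y ∂(κ x) ∂μ := by
  rw [aux_bind_eq μ κ, integral_map measurable_snd.aemeasurable hm.aestronglyMeasurable,
    Measure.integral_compProd (f := fun p => h p.2) (aux_int (hm.comp measurable_snd) (fun p => hb p.2))]

lemma aux_meas {X : Type*} [MeasurableSpace X] (κ : Kernel X X) [IsMarkovKernel κ]
    {h : X → ℝ} (hm : Measurable h) :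
    Measurable fun x => ∫ y, h y ∂(κ x) :=
  (MeasureTheory.StronglyMeasurable.integral_kernel_prod_right'
    (f := fun p : X × X => h p.2) (hm.comp measurable_snd).stronglyMeasurable).measurable

/-- First-order identity. -/
lemma aux_first {X : Type*} [MeasurableSpace X]
    (P P' : Kernel X X) [IsMarkovKernel P] [IsMarkovKernel P']
    (π π' : Measure X) [IsProbabilityMeasure π] [IsProbabilityMeasure π']
    (hinv : π.bind (fun x => P x) = π)
    (f Λf : X → ℝ) (hfm : Measurable f) (hΛfm : Measurable Λf)
    (Cf CΛf : ℝ) (hfb : ∀ x, |f x| ≤ Cf) (hΛfb : ∀ x, |Λf x| ≤ CΛf)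
    (hpoisson : ∀ x, Λf x - ∫ y, Λf y ∂(P' x) = f x - ∫ y, f y ∂π') :
    (∫ x, f x ∂π) - ∫ x, f x ∂π' =
      ∫ x, ((∫ y, Λf y ∂(P x)) - ∫ y, Λf y ∂(P' x)) ∂π := by
  have hb : ∀ (κ : Kernel X X) [IsMarkovKernel κ], ∀ x, |∫ y, Λf y ∂(κ x)| ≤ CΛf := by
    intro κ _ x
    calc |∫ y, Λf y ∂(κ x)|
        ≤ ∫ y, |Λf y| ∂(κ x) := by
          simpa [Real.norm_eq_abs] using norm_integral_le_integral_norm (μ := κ x) Λf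
      _ ≤ ∫ _, CΛf ∂(κ x) :=
          integral_mono (aux_int hΛfm hΛfb).abs (integrable_const _) fun y => hΛfb y
      _ = CΛf := by simp
  have hPint : Integrable (fun x => ∫ y, Λf y ∂(P x)) π := aux_int (aux_meas P hΛfm) (hb P)
  have hP'int : Integrable (fun x => ∫ y, Λf y ∂(P' x)) π := aux_int (aux_meas P' hΛfm) (hb P')
  have hΛint : Integrable Λf π := aux_int hΛfm hΛfb
  have hfint : Integrable f π := aux_int hfm hfb
  -- invariance: π(PΛf) = π(Λf)
  have hinvΛ : ∫ x, ∫ y, Λf y ∂(P x) ∂π = ∫ x, Λf x ∂π := by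
    rw [← aux_swap π P hΛfm hΛfb, hinv]
  -- integrate Poisson over π
  have h1 : ∫ x, (Λf x - ∫ y, Λf y ∂(P' x)) ∂π = (∫ x, f x ∂π) - ∫ x, f x ∂π' := by
    calc ∫ x, (Λf x - ∫ y, Λf y ∂(P' x)) ∂π
        = ∫ x, (f x - ∫ y, f y ∂π') ∂π := by
          exact integral_congr_ae (ae_of_all _ hpoisson)
      _ = (∫ x, f x ∂π) - ∫ x, f x ∂π' := by
          rw [integral_sub hfint (integrable_const _)]
          simp
  rw [integral_sub hPint hP'int, hinvΛ, ← integral_sub hΛint hP'int, h1]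

/-- Second-order linearization:
`π(f) − π'(f) = π'((P − P')Λ'f) + π((P − P')Λ'(P − P')Λ'f)`. -/
theorem stmt6 {X : Type*} [MeasurableSpace X]
    (P P' : Kernel X X) [IsMarkovKernel P] [IsMarkovKernel P']
    (π π' : Measure X) [IsProbabilityMeasure π] [IsProbabilityMeasure π']
    (hinv : π.bind (fun x => P x) = π) (hinv' : π'.bind (fun x => P' x) = π')
    (f Λf g Λg : X → ℝ)
    (hfm : Measurable f) (hΛfm : Measurable Λf) (hgm : Measurable g) (hΛgm : Measurable Λg)
    (Cf CΛf Cg CΛg : ℝ)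
    (hfb : ∀ x, |f x| ≤ Cf) (hΛfb : ∀ x, |Λf x| ≤ CΛf)
    (hgb : ∀ x, |g x| ≤ Cg) (hΛgb : ∀ x, |Λg x| ≤ CΛg)
    (hpoisson1 : ∀ x, Λf x - ∫ y, Λf y ∂(P' x) = f x - ∫ y, f y ∂π')
    (hgdef : ∀ x, g x = (∫ y, Λf y ∂(P x)) - ∫ y, Λf y ∂(P' x))
    (hpoisson2 : ∀ x, Λg x - ∫ y, Λg y ∂(P' x) = g x - ∫ y, g y ∂π') :
    (∫ x, f x ∂π) - ∫ x, f x ∂π' =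
      (∫ x, g x ∂π') +
        ∫ x, ((∫ y, Λg y ∂(P x)) - ∫ y, Λg y ∂(P' x)) ∂π := by
  have h1 : (∫ x, f x ∂π) - ∫ x, f x ∂π' = ∫ x, g x ∂π := by
    rw [aux_first P P' π π' hinv f Λf hfm hΛfm Cf CΛf hfb hΛfb hpoisson1]
    exact (integral_congr_ae (ae_of_all _ hgdef)).symm
  have h2 : (∫ x, g x ∂π) - ∫ x, g x ∂π' =
      ∫ x, ((∫ y, Λg y ∂(P x)) - ∫ y, Λg y ∂(P' x)) ∂π :=
    aux_first P P' π π' hinv g Λg hgm hΛgm Cg CΛg hgb hΛgb hpoisson2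
  rw [h1]
  linarith
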